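/- Let M be a bounded commutative idempotent monoid with top element ⊤, acting additively on an abelian group G. Define Φ : CRS(M, G) → G^⊤ by Φ(F) = F(⊤), and Ψ : G^⊤ → CRS(M, G) by [Ψ(g)](X) = g − X.g. Then Φ and Ψ are well-defined (i.e. F(⊤) ∈ G^⊤ for every F ∈ CRS(M, G), and Ψ(g) satisfies the chain rule for every g ∈ G^⊤) and are mutually inverse module isomorphisms: both are additive, both commute with the M-actions, and Φ ∘ Ψ and Ψ ∘ Φ are the identities. -/

import Mathlib

namespace AMRF
/-- An additive monoid action of a commutative monoid `M` on an abelian group `G`. -/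
structure MAction (M G : Type*) [CommMonoid M] [AddCommGroup G] where
  act : M → G → G
  act_one : ∀ g, act 1 g = g
  act_mul : ∀ X Y g, act X (act Y g) = act (X * Y) g
  act_add : ∀ X g h, act X (g + h) = act X g + act X h

variable {M G : Type*} [CommMonoid M] [AddCommGroup G]

/-- `F : M → G` satisfies the chain rule `F(XY) = F(X) + X.F(Y)`. -/
def ChainRule (A : MAction M G) (F : M → G) : Prop :=
  ∀ X Y : M, F (X * Y) = F X + A.act X (F Y)

/-- Higher-order terms on a *reversed* argument list: the head of the list is the *last*
argument `Y_q` in `F_q(Y₁; …; Y_q)`. -/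
def Fseq (A : MAction M G) (F : M → G) : List M → G
  | [] => 0
  | [Y] => F Y
  | Y :: Z :: l => Fseq A F (Z :: l) - A.act Y (Fseq A F (Z :: l))

/-- `Fof A F [Y₁, …, Y_q] = F_q(Y₁; …; Y_q)`, defined inductively by
`F_q(Y₁; …; Y_q) = F_{q−1}(Y₁; …; Y_{q−1}) − Y_q.F_{q−1}(Y₁; …; Y_{q−1})`. -/
def Fof (A : MAction M G) (F : M → G) (l : List M) : G :=
  Fseq A F l.reverse

/-- The interaction term `F(;_{i∈I} X_i)`, with arguments in increasing index order. -/
def Fint (A : MAction M G) (F : M → G) {ι : Type*} [LinearOrder ι] (X : ι → M)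
    (I : Finset ι) : G :=
  Fof A F ((I.sort (· ≤ ·)).map X)

/-- The `F`-independence relation: `X ⊥_F Y | Z` iff `Z.F(X; Y) = 0`, where
`F(X; Y) = F(X) − Y.F(X)` is the second-order term. -/
def Findep (A : MAction M G) (F : M → G) (X Y Z : M) : Prop :=
  A.act Z (F X - A.act Y (F X)) = 0

/-- Let `M` be a bounded commutative idempotent monoid with top element
`⊤` (i.e. `X·⊤ = ⊤` for all `X`), acting additively on the abelian group `G`. Consider
`Φ(F) = F(⊤)` on chain-rule functions and `Ψ(g) = fun X => g − X.g` on `G^⊤ = {g : ⊤.g = 0}`.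
Then: `Φ` lands in `G^⊤`; `Ψ(g)` satisfies the chain rule; `Φ` and `Ψ` are additive and
commute with the `M`-actions; and `Φ ∘ Ψ` and `Ψ ∘ Φ` are the identities. -/
theorem chain_rule_classification
    {M G : Type*} [CommMonoid M] [AddCommGroup G]
    (hidem : ∀ x : M, x * x = x)
    (A : MAction M G)
    (top : M) (htop : ∀ x : M, x * top = top) :
    -- Φ is well-defined: F(⊤) is annihilated by ⊤
    (∀ F : M → G, ChainRule A F → A.act top (F top) = 0) ∧
    -- Ψ is well-defined: Ψ(g) satisfies the chain rule
    (∀ g : G, A.act top g = 0 → ChainRule A (fun x => g - A.act x g)) ∧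
    -- Φ is additive
    (∀ F F' : M → G, ChainRule A F → ChainRule A F' →
      (fun x => F x + F' x) top = F top + F' top) ∧
    -- Φ commutes with the M-actions: Φ(X.F) = X.Φ(F)
    (∀ (x : M) (F : M → G), ChainRule A F →
      (fun y => A.act x (F y)) top = A.act x (F top)) ∧
    -- Ψ is additive: Ψ(g + h) = Ψ(g) + Ψ(h)
    (∀ g h : G, A.act top g = 0 → A.act top h = 0 →
      (fun x : M => (g + h) - A.act x (g + h)) =
        fun x : M => (g - A.act x g) + (h - A.act x h)) ∧
    -- Ψ commutes with the M-actions: Ψ(X.g) = X.Ψ(g)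
    (∀ (x : M) (g : G), A.act top g = 0 →
      (fun y : M => A.act x g - A.act y (A.act x g)) =
        fun y : M => A.act x (g - A.act y g)) ∧
    -- Φ ∘ Ψ = id on G^⊤
    (∀ g : G, A.act top g = 0 → g - A.act top g = g) ∧
    -- Ψ ∘ Φ = id on CRS(M, G)
    (∀ F : M → G, ChainRule A F → ∀ x : M, F top - A.act x (F top) = F x) := by
  have act_sub : ∀ (X : M) (g h : G), A.act X (g - h) = A.act X g - A.act X h := by
    intro X g h
    have h1 := A.act_add X (g - h) h
    rw [sub_add_cancel] at h1
    rw [h1]; abel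
  have hPhi : ∀ F : M → G, ChainRule A F → A.act top (F top) = 0 := by
    intro F hF
    have h := hF top top
    rw [hidem] at h
    exact (left_eq_add.mp h)
  refine ⟨hPhi, ?_, ?_, ?_, ?_, ?_, ?_, ?_⟩
  · intro g hg X Y
    beta_reduce
    rw [act_sub, A.act_mul]
    abel
  · intro F F' _ _; rfl
  · intro x F _; rfl
  · intro g h _ _
    funext x
    rw [A.act_add]; abel
  · intro x g _
    funext y
    rw [act_sub, A.act_mul, A.act_mul, mul_comm]
  · intro g hg; rw [hg, sub_zero]
  · intro F hF x
    have h := hF x top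
    rw [htop] at h
    exact sub_eq_of_eq_add h

end AMRF
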